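/- If f is a characteristic function whose essential support S_f = {x : f(x) ≠ 0} is connected (i.e., has exactly one connected component), then for every integer n ≥ 2, the only characteristic function g with g^n = f^n is g = f. -/

import Mathlib

open MeasureTheory Set

/-- The characteristic function of a measure `μ` on `ℝ`: `x ↦ ∫ e^{ixt} dμ(t)`. -/
noncomputable def charFunOf (μ : Measure ℝ) : ℝ → ℂ :=
  fun x => ∫ t, Complex.exp (x * t * Complex.I) ∂μ

/-- `f` is the characteristic function of some probability measure on `ℝ`. -/
def IsCharFun (f : ℝ → ℂ) : Prop :=
  ∃ μ : Measure ℝ, IsProbabilityMeasure μ ∧ f = charFunOf μ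

lemma charFunOf_zero (μ : Measure ℝ) [IsProbabilityMeasure μ] : charFunOf μ 0 = 1 := by
  simp [charFunOf]

lemma charFunOf_continuous (μ : Measure ℝ) [IsProbabilityMeasure μ] :
    Continuous (charFunOf μ) := by
  apply continuous_of_dominated (bound := fun _ => 1)
  · intro x
    exact (Complex.continuous_exp.comp (by continuity)).aestronglyMeasurable
  · intro x
    filter_upwards with t
    simp [Complex.norm_exp]
  · exact integrable_const 1
  · filter_upwards with t
    exact (by continuity : Continuous fun x : ℝ => Complex.exp (x * t * Complex.I))

/-- If the essential support of a characteristic function `f` is connected, then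
`C_n(f)` is trivial for every `n ≥ 2`. -/
theorem stmt8 (f : ℝ → ℂ) (hf : IsCharFun f) (hconn : IsConnected {x : ℝ | f x ≠ 0}) :
    ∀ n : ℕ, 2 ≤ n → ∀ g : ℝ → ℂ, IsCharFun g → (∀ x, g x ^ n = f x ^ n) → g = f := by
  intro n hn g hg hgf
  obtain ⟨μ, hμ, hfe⟩ := hf
  obtain ⟨ν, hν, hge⟩ := hg
  haveI := hμ; haveI := hν
  have hfc : Continuous f := hfe ▸ charFunOf_continuous μ
  have hgc : Continuous g := hge ▸ charFunOf_continuous ν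
  have hf0 : f 0 = 1 := by rw [hfe]; exact charFunOf_zero μ
  have hg0 : g 0 = 1 := by rw [hge]; exact charFunOf_zero ν
  have hnpos : n ≠ 0 := by omega
  have h0S : (0 : ℝ) ∈ {x : ℝ | f x ≠ 0} := by
    show f 0 ≠ 0
    rw [hf0]; exact one_ne_zero
  funext x
  by_cases hx : f x = 0
  · have h1 : g x ^ n = 0 := by rw [hgf x, hx, zero_pow hnpos]
    have := pow_eq_zero_iff hnpos |>.mp h1
    rw [this, hx]
  · -- the ratio g/f on the support
    set T : Set ℂ := {z : ℂ | z ^ n = 1} with hT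
    have hTfin : T.Finite := by
      apply Set.Finite.subset (Polynomial.nthRoots n (1 : ℂ)).toFinset.finite_toSet
      intro z hz
      rw [Finset.mem_coe, Multiset.mem_toFinset, Polynomial.mem_nthRoots (by omega : 0 < n)]
      exact hz
    haveI : Finite ↥T := hTfin.to_subtype
    have hc : ContinuousOn (fun y => g y / f y) {x : ℝ | f x ≠ 0} :=
      (hgc.continuousOn).div (hfc.continuousOn) (fun y hy => hy)
    have hmaps : Set.MapsTo (fun y => g y / f y) {x : ℝ | f x ≠ 0} T := by
      intro y hy
      have : (g y / f y) ^ n = 1 := by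
        rw [div_pow, hgf y, div_self (pow_ne_zero n hy)]
      exact this
    have hxS : x ∈ {x : ℝ | f x ≠ 0} := hx
    have hconst := hconn.isPreconnected.constant_of_mapsTo hTfin.isDiscrete hc hmaps hxS h0S
    simp only [hf0, hg0, div_one] at hconst
    exact (div_eq_one_iff_eq hx).mp hconst
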